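/- The series of arctangents of the b_k converges to π/4: π/4 = ∑_{k=1}^∞ arctan(b_k). -/

import Mathlib

open Real Filter Topology

theorem sum_arctan_b_eq_pi_div_four (a : ℕ → ℝ)
    (ha1 : a 1 = Real.sqrt 2)
    (ha : ∀ k ≥ 1, a (k + 1) = Real.sqrt (2 + a k))
    (b : ℕ → ℝ)
    (hb : ∀ k ≥ 1, b k = Real.sqrt (2 - a k) / a (k + 1)) :
    HasSum (fun k : ℕ => Real.arctan (b (k + 1))) (π / 4) := by
  have hpi := Real.pi_pos
  have hang : ∀ n : ℕ, 0 < π / 2 ^ (n + 2) ∧ π / 2 ^ (n + 2) ≤ π / 4 := by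
    intro n
    refine ⟨by positivity, ?_⟩
    apply div_le_div_of_nonneg_left hpi.le (by norm_num)
    calc (4 : ℝ) = 2 ^ 2 := by norm_num
      _ ≤ 2 ^ (n + 2) := by apply pow_le_pow_right₀ (by norm_num); omega
  -- a k = 2 cos (π / 2^(k+1))
  have hA : ∀ k, 1 ≤ k → a k = 2 * Real.cos (π / 2 ^ (k + 1)) := by
    intro k hk
    induction k, hk using Nat.le_induction with
    | base =>
        rw [ha1, show π / 2 ^ (1 + 1) = π / 4 by norm_num, Real.cos_pi_div_four]
        ring
    | succ n hn ih =>
        have hdd : π / 2 ^ (n + 1) = 2 * (π / 2 ^ (n + 2)) := by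
          rw [pow_succ]; field_simp; ring
        have hcos2 : Real.cos (π / 2 ^ (n + 1)) =
            2 * Real.cos (π / 2 ^ (n + 2)) ^ 2 - 1 := by
          rw [hdd, Real.cos_two_mul]
        have hcnn : 0 ≤ Real.cos (π / 2 ^ (n + 2)) := by
          apply Real.cos_nonneg_of_mem_Icc
          have h := hang n
          constructor
          · linarith [h.1]
          · linarith [h.2, hpi]
        rw [ha n hn, ih, hcos2, show (n + 1) + 1 = n + 2 from rfl]
        rw [show (2 : ℝ) + 2 * (2 * Real.cos (π / 2 ^ (n + 2)) ^ 2 - 1)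
              = (2 * Real.cos (π / 2 ^ (n + 2))) ^ 2 by ring]
        exact Real.sqrt_sq (by linarith)
  -- b k = tan (π / 2^(k+2))
  have hB : ∀ k, 1 ≤ k → b k = Real.tan (π / 2 ^ (k + 2)) := by
    intro k hk
    have h := hang k
    have hsinθ : 0 ≤ Real.sin (π / 2 ^ (k + 2)) := by
      apply Real.sin_nonneg_of_nonneg_of_le_pi
      · linarith [h.1]
      · linarith [h.2, hpi]
    have hdd : π / 2 ^ (k + 1) = 2 * (π / 2 ^ (k + 2)) := by
      rw [pow_succ]; field_simp; ring
    have hcos2 : Real.cos (π / 2 ^ (k + 1)) =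
        1 - 2 * Real.sin (π / 2 ^ (k + 2)) ^ 2 := by
      rw [hdd, Real.cos_two_mul']
      linarith [Real.sin_sq_add_cos_sq (π / 2 ^ (k + 2))]
    have h2 : (2 : ℝ) - a k = (2 * Real.sin (π / 2 ^ (k + 2))) ^ 2 := by
      rw [hA k hk, hcos2]; ring
    rw [hb k hk, h2, hA (k + 1) (by omega), Real.sqrt_sq (by linarith),
      Real.tan_eq_sin_div_cos, show (k + 1) + 1 = k + 2 from rfl,
      mul_div_mul_left _ _ (by norm_num : (2:ℝ) ≠ 0)]
  -- arctan (b (k+1)) = π / 2^(k+3)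
  have hArc : ∀ k : ℕ, Real.arctan (b (k + 1)) = π / 2 ^ (k + 3) := by
    intro k
    have h := hang (k + 1)
    rw [show (k + 1) + 2 = k + 3 from rfl] at h
    rw [hB (k + 1) (by omega), show (k + 1) + 2 = k + 3 from rfl]
    apply Real.arctan_tan
    · linarith [h.1, hpi]
    · linarith [h.2, hpi]
  have hfun : (fun k : ℕ => Real.arctan (b (k + 1)))
      = fun k : ℕ => π / 8 * (1 / 2 : ℝ) ^ k := by
    funext k
    rw [hArc k, show (2:ℝ) ^ (k + 3) = 8 * 2 ^ k by rw [pow_add]; ring,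
      div_pow, one_pow, div_mul_div_comm, mul_one]
  rw [hfun]
  have hgeo : HasSum (fun k : ℕ => (1 / 2 : ℝ) ^ k) 2 := by
    have h := hasSum_geometric_of_lt_one (by norm_num : (0:ℝ) ≤ 1/2)
      (by norm_num : (1/2 : ℝ) < 1)
    convert h using 1
    norm_num
  have := hgeo.mul_left (π / 8)
  convert this using 1
  · rfl
  ring
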